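/- arXiv:1705.07767 — 3 statements merged into one kernel-verified Lean document; each statement's English description precedes it below -/
import Mathlib

section
/- Let X be a nominal set, x ∈ X, and π a permutation. If π(a) = a for every a ∈ supp(x), then π • x = x. -/
/-- Atoms: pairs of a level (an integer) and an index (a natural number). -/
abbrev Atom : Type := ℤ × ℕ

/-- The level of an atom is its first component. -/
def level (a : Atom) : ℤ := a.1

/-- The group of finite, level-respecting permutations of atoms, as a
subgroup of the group of all bijections of `Atom`. -/
def APermSub : Subgroup (Equiv.Perm Atom) where
  carrier := {π | {a : Atom | π a ≠ a}.Finite ∧ ∀ a, level (π a) = level a}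
  one_mem' := ⟨Set.Finite.subset Set.finite_empty (fun _ ha => absurd rfl ha), fun _ => rfl⟩
  mul_mem' := by
    rintro π σ ⟨hπf, hπl⟩ ⟨hσf, hσl⟩
    refine ⟨(hπf.union hσf).subset ?_, fun a => ?_⟩
    · intro a ha
      rw [Set.mem_union]
      by_contra h
      push_neg at h
      simp only [Set.mem_setOf_eq, not_not] at h
      exact ha (by simp only [Set.mem_setOf_eq, Equiv.Perm.mul_apply, h.2, h.1, not_true] at *)
    · rw [Equiv.Perm.mul_apply, hπl, hσl]
  inv_mem' := by
    rintro π ⟨hf, hl⟩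
    refine ⟨hf.subset ?_, fun a => ?_⟩
    · intro a ha
      simp only [Set.mem_setOf_eq] at ha ⊢
      intro h
      apply ha
      conv_lhs => rw [← h]
      exact Equiv.symm_apply_apply π a
    · conv_rhs => rw [← Equiv.apply_symm_apply π a]
      exact (hl _).symm

/-- `A` supports `x` when every permutation fixing `A` pointwise fixes `x`. -/
def NSupports {X : Type*} [SMul APermSub X] (A : Set Atom) (x : X) : Prop :=
  ∀ π : APermSub, (∀ a ∈ A, (π : Equiv.Perm Atom) a = a) → π • x = x

/-- A set with a permutation action is nominal when every element has a
finite supporting set of atoms. -/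
def IsNominal (X : Type*) [SMul APermSub X] : Prop :=
  ∀ x : X, ∃ A : Set Atom, A.Finite ∧ NSupports A x

/-- The support of `x`: the intersection of all finite supporting sets. -/
def nsupp {X : Type*} [SMul APermSub X] (x : X) : Set Atom :=
  ⋂₀ {A : Set Atom | A.Finite ∧ NSupports A x}

section Aux

/-- A fresh atom of any level, avoiding a finite set. -/
lemma exists_fresh (S : Set Atom) (hS : S.Finite) (ℓ : ℤ) :
    ∃ c : Atom, level c = ℓ ∧ c ∉ S := by
  have hinj : Function.Injective (fun n : ℕ => ((ℓ, n) : Atom)) := by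
    intro m n h; simpa using h
  have hinf : (Set.range fun n : ℕ => ((ℓ, n) : Atom)).Infinite :=
    Set.infinite_range_of_injective hinj
  obtain ⟨c, hc, hcS⟩ := (hinf.diff hS).nonempty
  obtain ⟨n, rfl⟩ := hc
  exact ⟨(ℓ, n), rfl, hcS⟩

lemma swap_mem {a b : Atom} (h : level a = level b) : Equiv.swap a b ∈ APermSub := by
  constructor
  · exact ((Set.finite_singleton b).insert a).subset (fun c hc => by
      by_contra hcc
      simp only [Set.mem_insert_iff, Set.mem_singleton_iff, not_or] at hcc
      exact hc (Equiv.swap_apply_of_ne_of_ne hcc.1 hcc.2))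
  · intro c
    rcases eq_or_ne c a with rfl | hca
    · rw [Equiv.swap_apply_left]; exact h.symm
    rcases eq_or_ne c b with rfl | hcb
    · rw [Equiv.swap_apply_right]; exact h
    · rw [Equiv.swap_apply_of_ne_of_ne hca hcb]

/-- A swap of two atoms outside `A ∩ B` fixes `x`, if `A` and `B` support `x`. -/
lemma swap_smul {X : Type*} [MulAction APermSub X] {x : X} {A B : Set Atom}
    (hAf : A.Finite) (hBf : B.Finite) (hA : NSupports A x) (hB : NSupports B x) :
    ∀ a b : Atom, (h : level a = level b) → a ∉ A ∩ B → b ∉ A ∩ B →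
      (⟨Equiv.swap a b, swap_mem h⟩ : APermSub) • x = x := by
  -- first: if both are out of A (resp. B), done
  have key : ∀ (C : Set Atom), NSupports C x → ∀ a b : Atom, (h : level a = level b) →
      a ∉ C → b ∉ C → (⟨Equiv.swap a b, swap_mem h⟩ : APermSub) • x = x := by
    intro C hC a b h haC hbC
    apply hC
    intro c hc
    exact Equiv.swap_apply_of_ne_of_ne (fun hh => haC (hh ▸ hc)) (fun hh => hbC (hh ▸ hc))
  -- the mixed case, symmetric in a/b:
  have mixed : ∀ a b : Atom, (h : level a = level b) → a ∈ A → a ∉ B → b ∈ B → b ∉ A →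
      (⟨Equiv.swap a b, swap_mem h⟩ : APermSub) • x = x := by
    intro a b h haA haB hbB hbA
    obtain ⟨c, hcl, hcS⟩ := exists_fresh (A ∪ B ∪ {a, b}) ((hAf.union hBf).union ((Set.finite_singleton b).insert a)) (level a)
    simp only [Set.mem_union, Set.mem_insert_iff, Set.mem_singleton_iff, not_or] at hcS
    obtain ⟨⟨hcA, hcB⟩, hca, hcb⟩ := hcS
    have hbc : b ≠ c := fun hh => hcb hh.symm
    have hba : b ≠ a := fun hh => hbA (hh ▸ haA)
    have hca' : level c = level a := hcl
    have hswap : Equiv.swap c a * Equiv.swap b c * Equiv.swap c a = Equiv.swap a b :=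
      Equiv.swap_mul_swap_mul_swap hbc hba
    have h1 : level c = level a := hcl
    have h2 : level b = level c := h.symm.trans hcl.symm
    set t1 : APermSub := ⟨Equiv.swap c a, swap_mem h1⟩
    set t2 : APermSub := ⟨Equiv.swap b c, swap_mem h2⟩
    have heq : (⟨Equiv.swap a b, swap_mem h⟩ : APermSub) = t1 * t2 * t1 := by
      apply Subtype.ext
      simpa using hswap.symm
    have ht1 : t1 • x = x := key B hB c a h1 hcB haB
    have ht2 : t2 • x = x := key A hA b c h2 hbA hcA
    rw [heq, mul_smul, mul_smul, ht1, ht2, ht1]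
  intro a b h ha hb
  simp only [Set.mem_inter_iff, not_and_or] at ha hb
  by_cases haA : a ∈ A
  · have haB : a ∉ B := ha.resolve_left (by simp [haA])
    by_cases hbB : b ∈ B
    · have hbA : b ∉ A := hb.resolve_right (by simp [hbB])
      exact mixed a b h haA haB hbB hbA
    · exact key B hB a b h haB hbB
  · by_cases hbA : b ∈ A
    · have hbB : b ∉ B := hb.resolve_left (by simp [hbA])
      by_cases haB : a ∈ B
      · have := mixed b a h.symm hbA hbB haB haA
        rw [show (⟨Equiv.swap a b, swap_mem h⟩ : APermSub)
            = ⟨Equiv.swap b a, swap_mem h.symm⟩ from Subtype.ext (Equiv.swap_comm a b)]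
        exact this
      · exact key B hB a b h haB hbB
    · exact key A hA a b h haA hbA

/-- The intersection of two finite supports is a support. -/
lemma inter_supports {X : Type*} [MulAction APermSub X] {x : X} {A B : Set Atom}
    (hAf : A.Finite) (hBf : B.Finite) (hA : NSupports A x) (hB : NSupports B x) :
    NSupports (A ∩ B) x := by
  suffices aux : ∀ n : ℕ, ∀ π : APermSub,
      {a : Atom | (π : Equiv.Perm Atom) a ≠ a}.ncard ≤ n →
      (∀ a ∈ A ∩ B, (π : Equiv.Perm Atom) a = a) → π • x = x by
    intro π hfix
    exact aux _ π le_rfl hfix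
  intro n
  induction n with
  | zero =>
    intro π hcard hfix
    have hfin : {a : Atom | (π : Equiv.Perm Atom) a ≠ a}.Finite := π.2.1
    have : {a : Atom | (π : Equiv.Perm Atom) a ≠ a} = ∅ := by
      rw [← Set.ncard_eq_zero hfin]; omega
    have hπ1 : π = 1 := by
      apply Subtype.ext
      apply Equiv.ext
      intro a
      have ha := Set.eq_empty_iff_forall_notMem.mp this a
      simp only [Set.mem_setOf_eq, not_not] at ha
      simpa using ha
    rw [hπ1, one_smul]
  | succ n ih =>
    intro π hcard hfix
    have hfin : {a : Atom | (π : Equiv.Perm Atom) a ≠ a}.Finite := π.2.1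
    rcases Set.eq_empty_or_nonempty {a : Atom | (π : Equiv.Perm Atom) a ≠ a} with hemp | ⟨a, ha⟩
    · exact ih π (by rw [hemp]; simp) hfix
    · have haS : a ∈ {c : Atom | (π : Equiv.Perm Atom) c ≠ c} := ha
      simp only [Set.mem_setOf_eq] at ha
      set b := (π : Equiv.Perm Atom) a with hb
      have hlev : level a = level b := (π.2.2 a).symm
      have haAB : a ∉ A ∩ B := fun h => ha (hfix a h)
      have hbAB : b ∉ A ∩ B := by
        intro h
        have hπb : (π : Equiv.Perm Atom) b = b := hfix b h
        exact ha ((π : Equiv.Perm Atom).injective (hπb.trans rfl) ▸ rfl)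
      set t : APermSub := ⟨Equiv.swap a b, swap_mem hlev⟩ with ht
      set π' : APermSub := t * π with hπ'
      have hπ'a : (π' : Equiv.Perm Atom) a = a := by
        simp [hπ', ht, ← hb, Equiv.swap_apply_right]
      have hsub : {c : Atom | (π' : Equiv.Perm Atom) c ≠ c} ⊆
          {c : Atom | (π : Equiv.Perm Atom) c ≠ c} \ {a} := by
        intro c hc
        simp only [Set.mem_setOf_eq] at hc
        constructor
        · simp only [Set.mem_setOf_eq]
          intro hπc
          apply hc
          simp only [hπ', ht, Subgroup.coe_mul, Equiv.Perm.mul_apply, hπc]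
          rcases eq_or_ne c a with rfl | hca
          · exact absurd hπc ha
          rcases eq_or_ne c b with rfl | hcb
          · exact absurd ((π : Equiv.Perm Atom).injective (hπc.trans hb)) ha
          · exact Equiv.swap_apply_of_ne_of_ne hca hcb
        · simp only [Set.mem_singleton_iff]
          rintro rfl
          exact hc hπ'a
      have hcard' : {c : Atom | (π' : Equiv.Perm Atom) c ≠ c}.ncard ≤ n := by
        have h1 : {c : Atom | (π' : Equiv.Perm Atom) c ≠ c}.ncard ≤
            ({c : Atom | (π : Equiv.Perm Atom) c ≠ c} \ {a}).ncard :=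
          Set.ncard_le_ncard hsub hfin.diff
        have h2 : ({c : Atom | (π : Equiv.Perm Atom) c ≠ c} \ {a}).ncard
            = {c : Atom | (π : Equiv.Perm Atom) c ≠ c}.ncard - 1 := by
          exact Set.ncard_diff_singleton_of_mem haS
        have h3 : 1 ≤ {c : Atom | (π : Equiv.Perm Atom) c ≠ c}.ncard :=
          (Set.ncard_pos hfin).mpr ⟨a, haS⟩
        omega
      have hfix' : ∀ c ∈ A ∩ B, (π' : Equiv.Perm Atom) c = c := by
        intro c hc
        simp only [hπ', ht, Subgroup.coe_mul, Equiv.Perm.mul_apply, hfix c hc]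
        exact Equiv.swap_apply_of_ne_of_ne (fun h => haAB (h ▸ hc)) (fun h => hbAB (h ▸ hc))
      have hπ's : π' • x = x := ih π' hcard' hfix'
      have htx : t • x = x := swap_smul hAf hBf hA hB a b hlev haAB hbAB
      have : π = t⁻¹ * π' := by rw [hπ']; group
      rw [this, mul_smul, hπ's]
      have htinv : t⁻¹ = t := by
        apply Subtype.ext
        simp [ht, Equiv.swap_inv]
      rw [htinv, htx]

end Aux

/-- If a permutation fixes every atom in the support of `x`, then it fixes `x`. -/
theorem smul_eq_self_of_fix_supp {X : Type*} [MulAction APermSub X]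
    (hX : IsNominal X) (x : X) (π : APermSub)
    (h : ∀ a ∈ nsupp x, (π : Equiv.Perm Atom) a = a) :
    π • x = x := by
  obtain ⟨A₀, hA₀f, hA₀⟩ := hX x
  set F : Set (Set Atom) := {A : Set Atom | A.Finite ∧ NSupports A x} with hF
  have hA₀F : A₀ ∈ F := ⟨hA₀f, hA₀⟩
  -- F is closed under binary intersection
  have hFinter : ∀ A ∈ F, ∀ B ∈ F, A ∩ B ∈ F := by
    rintro A ⟨hAf, hA⟩ B ⟨hBf, hB⟩
    exact ⟨hAf.inter_of_left B, inter_supports hAf hBf hA hB⟩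
  -- choose a member of F with minimal ncard among subsets of A₀ in F
  set N : Set ℕ := {n | ∃ A ∈ F, A ⊆ A₀ ∧ A.ncard = n} with hN
  have hNne : N.Nonempty := ⟨A₀.ncard, A₀, hA₀F, subset_rfl, rfl⟩
  obtain ⟨C, hCF, hCsub, hCcard⟩ : ∃ A ∈ F, A ⊆ A₀ ∧ A.ncard = sInf N := Nat.sInf_mem hNne
  have hCfin : C.Finite := hCF.1
  -- C is contained in every member of F
  have hCmin : ∀ A ∈ F, C ⊆ A := by
    intro A hAF
    by_contra hns
    have hCA : C ∩ A ∈ F := hFinter C hCF A hAF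
    have hlt : (C ∩ A).ncard < C.ncard := by
      apply Set.ncard_lt_ncard _ hCfin
      exact ⟨Set.inter_subset_left, fun hsub => hns (fun c hc => (hsub hc).2)⟩
    have : (C ∩ A).ncard ∈ N := ⟨C ∩ A, hCA, Set.inter_subset_left.trans hCsub, rfl⟩
    have := Nat.sInf_le this
    omega
  -- hence C = nsupp x
  have hCeq : C = nsupp x := by
    apply subset_antisymm
    · exact Set.subset_sInter (fun A hAF => hCmin A hAF)
    · exact Set.sInter_subset_of_mem hCF
  exact hCF.2 π (fun a ha => h a (hCeq ▸ ha))
end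

section
/- Let X be a nominal set, x ∈ X, and a an atom. Then a # x if and only if there exists an atom b distinct from a with level(b) = level(a) such that b # x and (b a) • x = x. -/
/-- The swapping `(a b)` of two atoms of equal level, as a permutation. -/
def nswap (a b : Atom) (h : level a = level b) : APermSub :=
  ⟨Equiv.swap a b, by
    constructor
    · apply ((Set.finite_singleton b).insert a).subset
      intro c hc
      by_contra hcc
      simp only [Set.mem_insert_iff, Set.mem_singleton_iff, not_or] at hcc
      exact hc (Equiv.swap_apply_of_ne_of_ne hcc.1 hcc.2)
    · intro c
      rcases eq_or_ne c a with rfl | hca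
      · rw [Equiv.swap_apply_left]; exact h.symm
      rcases eq_or_ne c b with rfl | hcb
      · rw [Equiv.swap_apply_right]; exact h
      · rw [Equiv.swap_apply_of_ne_of_ne hca hcb]⟩

/-- `a` is fresh for `x` iff some atom `b ≠ a` of the same level is fresh for `x`
and the swapping `(b a)` fixes `x`. -/
theorem fresh_iff_exists_fresh_swap {X : Type*} [MulAction APermSub X]
    (hX : IsNominal X) (x : X) (a : Atom) :
    a ∉ nsupp x ↔
      ∃ (b : Atom) (h : level b = level a),
        b ≠ a ∧ b ∉ nsupp x ∧ nswap b a h • x = x := by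
  constructor
  · intro ha
    rw [nsupp, Set.mem_sInter] at ha
    push_neg at ha
    obtain ⟨A, ⟨hAfin, hAsupp⟩, haA⟩ := ha
    have hinf : (Set.range (fun n : ℕ => ((a.1, n) : Atom))).Infinite :=
      Set.infinite_range_of_injective (fun m n hmn => by simpa using congrArg Prod.snd hmn)
    obtain ⟨b, hbmem, hbnot⟩ :=
      (hinf.diff (hAfin.union (Set.finite_singleton a))).nonempty
    simp only [Set.mem_union, Set.mem_singleton_iff, not_or] at hbnot
    obtain ⟨n, rfl⟩ := hbmem
    have hbnot1 : ((a.1, n) : Atom) ∉ A := hbnot.1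
    have hbnot2 : ((a.1, n) : Atom) ≠ a := hbnot.2
    have hlev : level ((a.1, n) : Atom) = level a := rfl
    refine ⟨(a.1, n), hlev, hbnot2, ?_, ?_⟩
    · exact fun hmem => hbnot1 (Set.mem_sInter.mp hmem A ⟨hAfin, hAsupp⟩)
    · apply hAsupp
      intro c hc
      have hcb : c ≠ ((a.1, n) : Atom) := fun hh => hbnot1 (hh ▸ hc)
      have hca : c ≠ a := fun h => haA (h ▸ hc)
      exact Equiv.swap_apply_of_ne_of_ne hcb hca
  · rintro ⟨b, h, hba, hb, hswap⟩
    rw [nsupp, Set.mem_sInter] at hb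
    push_neg at hb
    obtain ⟨A, ⟨hAfin, hAsupp⟩, hbA⟩ := hb
    set σ : APermSub := nswap b a h with hσ
    have hBsupp : NSupports ((σ : Equiv.Perm Atom) '' A) x := by
      intro π hπ
      have hτ : (σ⁻¹ * π * σ) • x = x := by
        apply hAsupp
        intro c hc
        have hfix : (π : Equiv.Perm Atom) ((σ : Equiv.Perm Atom) c)
            = (σ : Equiv.Perm Atom) c := hπ _ ⟨c, hc, rfl⟩
        simp only [Subgroup.coe_mul, Equiv.Perm.mul_apply, hfix]
        simp
      calc π • x = π • (σ • x) := by rw [hswap]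
        _ = (π * σ) • x := (mul_smul _ _ _).symm
        _ = (σ * (σ⁻¹ * π * σ)) • x := by group
        _ = σ • ((σ⁻¹ * π * σ) • x) := mul_smul _ _ _
        _ = σ • x := by rw [hτ]
        _ = x := hswap
    have haB : a ∉ (σ : Equiv.Perm Atom) '' A := by
      rintro ⟨c, hc, hce⟩
      have : c = b := by
        have := congrArg (σ : Equiv.Perm Atom).symm hce
        simpa [hσ, nswap, Equiv.symm_apply_apply, Equiv.swap_apply_right] using this
      exact hbA (this ▸ hc)
    intro hmem
    exact haB (Set.mem_sInter.mp hmem _ ⟨hAfin.image _, hBsupp⟩)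
end

section
/- Let X be a nominal set, x ∈ X, and a an atom of level i. Then the atoms-abstraction [a]x, as an element of the powerset of 𝔸 × X with the pointwise action, has finite support and supp([a]x) = supp(x) \ {a}; in particular a # [a]x. -/
/-- Atoms-abstraction `[a]x`, as a subset of `Atom × X`. -/
def absAtom {X : Type*} [MulAction APermSub X] (a : Atom) (x : X) : Set (Atom × X) :=
  {p : Atom × X | ∃ π : APermSub,
     (∀ c ∈ nsupp x \ {a}, (π : Equiv.Perm Atom) c = c) ∧
     p = ((π : Equiv.Perm Atom) a, π • x)}

open Pointwise
section Dev

variable {X : Type*} [MulAction APermSub X]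

/-- The swap of two atoms of the same level, as an element of `APermSub`. -/
def aswap (c d : Atom) (h : level c = level d) : APermSub :=
  ⟨Equiv.swap c d, by
    constructor
    · apply Set.Finite.subset ((Set.finite_singleton d).insert c)
      intro a ha
      simp only [Set.mem_setOf_eq] at ha
      by_contra hmem
      simp only [Set.mem_insert_iff, Set.mem_singleton_iff, not_or] at hmem
      exact ha (Equiv.swap_apply_of_ne_of_ne hmem.1 hmem.2)
    · intro a
      rcases eq_or_ne a c with rfl | hac
      · rw [Equiv.swap_apply_left]; exact h.symm
      rcases eq_or_ne a d with rfl | had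
      · rw [Equiv.swap_apply_right]; exact h
      · rw [Equiv.swap_apply_of_ne_of_ne hac had]⟩

@[simp] lemma aswap_coe (c d : Atom) (h : level c = level d) :
    ((aswap c d h : APermSub) : Equiv.Perm Atom) = Equiv.swap c d := rfl

lemma atoms_of_level_infinite (l : ℤ) : {a : Atom | level a = l}.Infinite := by
  apply Set.infinite_of_injective_forall_mem (f := fun n : ℕ => ((l, n) : Atom))
  · intro m n hmn
    simpa [Prod.ext_iff] using hmn
  · intro n; rfl

/-- A fresh atom of a given level avoiding a finite set. -/
lemma exists_fresh_s8 (l : ℤ) (B : Set Atom) (hB : B.Finite) :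
    ∃ e : Atom, level e = l ∧ e ∉ B := by
  obtain ⟨e, he⟩ := ((atoms_of_level_infinite l).diff hB).nonempty
  exact ⟨e, he.1, he.2⟩

lemma swap_smul_of_supports {A B : Set Atom} {x : X}
    (hAf : A.Finite) (hBf : B.Finite) (hA : NSupports A x) (hB : NSupports B x)
    {c d : Atom} (hlev : level c = level d)
    (hc : c ∉ A ∩ B) (hd : d ∉ A ∩ B) : aswap c d hlev • x = x := by
  rcases eq_or_ne c d with rfl | hcd
  · have : aswap c c hlev = 1 := Subtype.ext (Equiv.swap_self c)
    rw [this, one_smul]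
  have key : ∀ (S : Set Atom), NSupports S x → ∀ (u v : Atom) (h : level u = level v),
      u ∉ S → v ∉ S → aswap u v h • x = x := by
    intro S hS u v h hu hv
    apply hS
    intro e he
    rw [aswap_coe]
    exact Equiv.swap_apply_of_ne_of_ne (fun h' => hu (h' ▸ he)) (fun h' => hv (h' ▸ he))
  obtain ⟨e, hel, he⟩ := exists_fresh_s8 (level c) (A ∪ B ∪ {c, d})
    ((hAf.union hBf).union ((Set.finite_singleton d).insert c))
  simp only [Set.mem_union, Set.mem_insert_iff, Set.mem_singleton_iff, not_or] at he
  have heA : e ∉ A := he.1.1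
  have heB : e ∉ B := he.1.2
  have hed : e ≠ d := he.2.2
  have h1 : level c = level e := hel.symm
  have h2 : level e = level d := by rw [hel]; exact hlev
  have hdecomp : aswap c d hlev = aswap c e h1 * aswap e d h2 * aswap c e h1 := by
    apply Subtype.ext
    show Equiv.swap c d = Equiv.swap c e * Equiv.swap e d * Equiv.swap c e
    have h0 := Equiv.swap_mul_swap_mul_swap (x := d) (y := c) (z := e)
      (Ne.symm hcd) (Ne.symm hed)
    have h3 : Equiv.swap d c = Equiv.swap c e * Equiv.swap e d * Equiv.swap c e := by
      rw [← h0]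
      group
      simp [Equiv.swap_mul_self, ← mul_assoc]
    rw [Equiv.swap_comm c d, h3]
  have main : ∀ (S T : Set Atom), NSupports S x → NSupports T x →
      c ∉ S → e ∉ S → e ∉ T → d ∉ T → aswap c d hlev • x = x := by
    intro S T hS hT h1' h2' h3' h4'
    rw [hdecomp, mul_smul, mul_smul, key S hS c e h1 h1' h2',
      key T hT e d h2 h3' h4', key S hS c e h1 h1' h2']
  by_cases hcA : c ∈ A
  · have hcB : c ∉ B := fun h => hc ⟨hcA, h⟩
    by_cases hdB : d ∈ B
    · exact main B A hB hA hcB heB heA (fun h => hd ⟨h, hdB⟩)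
    · exact key B hB c d hlev hcB hdB
  · by_cases hdA : d ∈ A
    · exact main A B hA hB hcA heA heB (fun h => hd ⟨hdA, h⟩)
    · exact key A hA c d hlev hcA hdA

lemma nsupports_univ {x : X} : NSupports (Set.univ : Set Atom) x := by
  intro π h
  have : π = 1 := Subtype.ext (Equiv.ext fun a => h a (Set.mem_univ a))
  rw [this, one_smul]

lemma nsupports_inter {A B : Set Atom} {x : X}
    (hAf : A.Finite) (hBf : B.Finite) (hA : NSupports A x) (hB : NSupports B x) :
    NSupports (A ∩ B) x := by
  intro π hπ
  suffices h : ∀ n (π : APermSub), {a | (π : Equiv.Perm Atom) a ≠ a}.ncard ≤ n →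
      (∀ a ∈ A ∩ B, (π : Equiv.Perm Atom) a = a) → π • x = x by
    exact h _ π le_rfl hπ
  clear hπ
  intro n
  induction n with
  | zero =>
    intro π hcard hfix
    have hfin : {a | (π : Equiv.Perm Atom) a ≠ a}.Finite := π.2.1
    have hempty : {a | (π : Equiv.Perm Atom) a ≠ a} = ∅ := by
      rw [← Set.ncard_eq_zero hfin]
      omega
    have hone : π = 1 := by
      apply Subtype.ext
      apply Equiv.ext
      intro a
      by_contra h
      exact absurd (Set.eq_empty_iff_forall_notMem.mp hempty a) (by simpa using h)
    rw [hone, one_smul]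
  | succ n ih =>
    intro π hcard hfix
    by_cases hone : π = 1
    · rw [hone, one_smul]
    have hmoved : {a | (π : Equiv.Perm Atom) a ≠ a}.Nonempty := by
      rw [Set.nonempty_iff_ne_empty]
      intro h
      apply hone
      apply Subtype.ext
      apply Equiv.ext
      intro a
      by_contra h'
      exact absurd (Set.eq_empty_iff_forall_notMem.mp h a) (by simpa using h')
    obtain ⟨c, hc⟩ := hmoved
    simp only [Set.mem_setOf_eq] at hc
    set d := (π : Equiv.Perm Atom) c with hdd
    have hlev : level c = level d := (π.2.2 c).symm
    have hcd : c ≠ d := fun h => hc h.symm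
    set s := aswap c d hlev with hs
    set π' := s * π with hπ'
    have hπ'app : ∀ a, (π' : Equiv.Perm Atom) a = Equiv.swap c d ((π : Equiv.Perm Atom) a) :=
      fun a => rfl
    have hdmoved : (π : Equiv.Perm Atom) d ≠ d := by
      intro h
      exact hcd ((π : Equiv.Perm Atom).injective (hdd ▸ h.symm))
    have hsub : {a | (π' : Equiv.Perm Atom) a ≠ a} ⊆ {a | (π : Equiv.Perm Atom) a ≠ a} \ {c} := by
      intro a ha
      simp only [Set.mem_setOf_eq, hπ'app] at ha
      constructor
      · intro h
        rw [h] at ha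
        rcases eq_or_ne a c with rfl | hac
        · exact hc h
        rcases eq_or_ne a d with rfl | had
        · exact hdmoved h
        · exact ha (Equiv.swap_apply_of_ne_of_ne hac had)
      · intro h
        simp only [Set.mem_singleton_iff] at h
        subst h
        exact ha (by rw [← hdd, Equiv.swap_apply_right])
    have hcard' : {a | (π' : Equiv.Perm Atom) a ≠ a}.ncard ≤ n := by
      have h1 : {a | (π' : Equiv.Perm Atom) a ≠ a}.ncard ≤
          ({a | (π : Equiv.Perm Atom) a ≠ a} \ {c}).ncard :=
        Set.ncard_le_ncard hsub π.2.1.diff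
      have h2 : ({a | (π : Equiv.Perm Atom) a ≠ a} \ {c}).ncard <
          {a | (π : Equiv.Perm Atom) a ≠ a}.ncard :=
        Set.ncard_diff_singleton_lt_of_mem hc π.2.1
      omega
    have hcAB : c ∉ A ∩ B := fun h => hc (hfix c h)
    have hdAB : d ∉ A ∩ B := fun h => hdmoved (hfix d h)
    have hfix' : ∀ a ∈ A ∩ B, (π' : Equiv.Perm Atom) a = a := by
      intro a ha
      rw [hπ'app, hfix a ha]
      exact Equiv.swap_apply_of_ne_of_ne (fun h => hcAB (h ▸ ha)) (fun h => hdAB (h ▸ ha))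
    have hdec : π = s * π' := by
      apply Subtype.ext
      show (π : Equiv.Perm Atom) = Equiv.swap c d * (Equiv.swap c d * (π : Equiv.Perm Atom))
      rw [← mul_assoc, Equiv.swap_mul_self, one_mul]
    rw [hdec, mul_smul, ih π' hcard' hfix']
    exact swap_smul_of_supports hAf hBf hA hB hlev hcAB hdAB

lemma nsupports_sInter {x : X} {F : Set (Set Atom)} (hF : F.Finite)
    (h : ∀ S ∈ F, S.Finite ∧ NSupports S x) :
    NSupports (⋂₀ F) x ∧ (F.Nonempty → (⋂₀ F).Finite) := by
  induction F, hF using Set.Finite.induction_on with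
  | empty =>
    refine ⟨by rw [Set.sInter_empty]; exact nsupports_univ, ?_⟩
    rintro ⟨S, hS⟩
    exact absurd hS (Set.notMem_empty S)
  | insert hns hfin ih =>
    rename_i a F
    have hA := h a (Set.mem_insert a F)
    obtain ⟨ihs, ihf⟩ := ih (fun S hS => h S (Set.mem_insert_of_mem a hS))
    rw [Set.sInter_insert]
    rcases F.eq_empty_or_nonempty with rfl | hne
    · simp only [Set.sInter_empty, Set.inter_univ]
      exact ⟨hA.2, fun _ => hA.1⟩
    · exact ⟨nsupports_inter hA.1 (ihf hne) hA.2 ihs,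
        fun _ => hA.1.inter_of_left _⟩

lemma nsupp_subset {x : X} {A : Set Atom} (hAf : A.Finite) (hA : NSupports A x) :
    nsupp x ⊆ A :=
  Set.sInter_subset_of_mem ⟨hAf, hA⟩

lemma nsupp_finite (hX : IsNominal X) (x : X) : (nsupp x).Finite := by
  obtain ⟨A, hAf, hA⟩ := hX x
  exact hAf.subset (nsupp_subset hAf hA)

lemma nsupp_supports (hX : IsNominal X) (x : X) : NSupports (nsupp x) x := by
  obtain ⟨A₀, hA₀f, hA₀⟩ := hX x
  set F : Set (Set Atom) := (fun A => A ∩ A₀) '' {A | A.Finite ∧ NSupports A x} with hF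
  have hFfin : F.Finite := by
    apply Set.Finite.subset hA₀f.finite_subsets
    rintro S ⟨A, _, rfl⟩
    exact Set.inter_subset_right
  have hmem : ∀ S ∈ F, S.Finite ∧ NSupports S x := by
    rintro S ⟨A, ⟨hAfin, hAsupp⟩, rfl⟩
    exact ⟨hA₀f.inter_of_right _, nsupports_inter hAfin hA₀f hAsupp hA₀⟩
  have heq : ⋂₀ F = nsupp x := by
    apply Set.Subset.antisymm
    · intro p hp
      intro A hA
      have : A ∩ A₀ ∈ F := ⟨A, hA, rfl⟩
      exact (hp _ this).1
    · intro p hp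
      rintro S ⟨A, hA, rfl⟩
      exact ⟨hp A hA, hp A₀ ⟨hA₀f, hA₀⟩⟩
  have := (nsupports_sInter hFfin hmem).1
  rwa [heq] at this

lemma nsupports_smul {x : X} {A : Set Atom} (hA : NSupports A x) (π : APermSub) :
    NSupports ((π : Equiv.Perm Atom) '' A) (π • x) := by
  intro σ hσ
  have hfix : ∀ a ∈ A, ((π⁻¹ * σ * π : APermSub) : Equiv.Perm Atom) a = a := by
    intro a ha
    have hr : ((π⁻¹ * σ * π : APermSub) : Equiv.Perm Atom) a =
        ((π : Equiv.Perm Atom))⁻¹ ((σ : Equiv.Perm Atom) ((π : Equiv.Perm Atom) a)) := rfl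
    rw [hr, hσ _ ⟨a, ha, rfl⟩]
    exact Equiv.symm_apply_apply _ _
  have := hA _ hfix
  calc σ • π • x = π • (π⁻¹ * σ * π : APermSub) • x := by
        rw [← mul_smul, ← mul_smul, ← mul_assoc, ← mul_assoc, mul_inv_cancel, one_mul]
      _ = π • x := by rw [this]

lemma not_mem_nsupp_of_swap (hX : IsNominal X) {x : X} {c d : Atom}
    (hlev : level c = level d) (hd : d ∉ nsupp x) (hs : aswap c d hlev • x = x)
    (hcd : c ≠ d) : c ∉ nsupp x := by
  intro hc
  have hsupp := nsupports_smul (nsupp_supports hX x) (aswap c d hlev)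
  rw [hs] at hsupp
  have hfin : ((Equiv.swap c d : Equiv.Perm Atom) '' nsupp x).Finite :=
    (nsupp_finite hX x).image _
  have hsub := nsupp_subset hfin hsupp
  obtain ⟨e, he, heq⟩ := hsub hc
  have : e = d := by
    by_contra hne
    rcases eq_or_ne e c with rfl | hec
    · rw [Equiv.swap_apply_left] at heq; exact hcd heq.symm
    · rw [Equiv.swap_apply_of_ne_of_ne hec hne] at heq; exact hec heq
  exact hd (this ▸ he)

end Dev


/-- Atoms-abstraction `[a]x`, as an element of the powerset of `Atom × X` with the
pointwise action, has finite support, and `supp ([a]x) = supp x \ {a}`;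
in particular `a # [a]x`. -/
theorem supp_absAtom {X : Type*} [MulAction APermSub X]
    (hX : IsNominal X) (a : Atom) (x : X) :
    (∃ A : Set Atom, A.Finite ∧ NSupports A (absAtom a x)) ∧
      nsupp (absAtom a x) = nsupp x \ {a} ∧ a ∉ nsupp (absAtom a x) := by
  have hxfin : (nsupp x).Finite := nsupp_finite hX x
  have hSfin : (nsupp x \ {a}).Finite := hxfin.diff
  have hsub : ∀ π : APermSub, (∀ c ∈ nsupp x \ {a}, (π : Equiv.Perm Atom) c = c) →
      π • absAtom a x ⊆ absAtom a x := by
    intro π hπ p hp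
    obtain ⟨q, hq, rfl⟩ := Set.mem_smul_set.mp hp
    obtain ⟨σ, hσ, rfl⟩ := hq
    refine ⟨π * σ, ?_, ?_⟩
    · intro c hc
      show (π : Equiv.Perm Atom) ((σ : Equiv.Perm Atom) c) = c
      rw [hσ c hc, hπ c hc]
    · exact Prod.ext rfl (mul_smul π σ x).symm
  have hNS : NSupports (nsupp x \ {a}) (absAtom a x) := by
    intro π hπ
    apply Set.Subset.antisymm (hsub π hπ)
    have hinv : ∀ c ∈ nsupp x \ {a}, ((π⁻¹ : APermSub) : Equiv.Perm Atom) c = c := by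
      intro c hc
      have : ((π⁻¹ : APermSub) : Equiv.Perm Atom) = ((π : APermSub) : Equiv.Perm Atom)⁻¹ := rfl
      rw [this]
      conv_lhs => rw [← hπ c hc]
      exact Equiv.symm_apply_apply _ _
    conv_lhs => rw [← smul_inv_smul π (absAtom a x)]
    exact Set.smul_set_mono (hsub π⁻¹ hinv)
  have heq : nsupp (absAtom a x) = nsupp x \ {a} := by
    apply Set.Subset.antisymm (nsupp_subset hSfin hNS)
    rintro c ⟨hc1, hc2⟩
    rw [Set.mem_singleton_iff] at hc2
    intro B hBmem
    obtain ⟨hBf, hB⟩ := hBmem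
    by_contra hcB
    obtain ⟨d, hdl, hd⟩ := exists_fresh_s8 (level c) (B ∪ nsupp x ∪ {a, c})
      ((hBf.union hxfin).union ((Set.finite_singleton c).insert a))
    simp only [Set.mem_union, Set.mem_insert_iff, Set.mem_singleton_iff, not_or] at hd
    have hdB : d ∉ B := hd.1.1
    have hdx : d ∉ nsupp x := hd.1.2
    have hda : d ≠ a := hd.2.1
    have hdc : d ≠ c := hd.2.2
    have hlev : level c = level d := hdl.symm
    set s := aswap c d hlev with hs
    have hfixB : ∀ e ∈ B, (s : Equiv.Perm Atom) e = e := by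
      intro e he
      rw [hs, aswap_coe]
      exact Equiv.swap_apply_of_ne_of_ne (fun h => hcB (h ▸ he)) (fun h => hdB (h ▸ he))
    have hsZ : s • absAtom a x = absAtom a x := hB s hfixB
    have hmem : ((a : Atom), x) ∈ absAtom a x :=
      ⟨1, fun c _ => rfl, Prod.ext rfl (one_smul _ x).symm⟩
    have hmem2 : s • ((a, x) : Atom × X) ∈ absAtom a x := hsZ ▸ Set.smul_mem_smul_set hmem
    have hsa : (s : Equiv.Perm Atom) a = a := by
      rw [hs, aswap_coe]
      exact Equiv.swap_apply_of_ne_of_ne (fun h => hc2 h.symm) (Ne.symm hda)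
    have hmem3 : ((a : Atom), s • x) ∈ absAtom a x := by
      have : s • ((a, x) : Atom × X) = (a, s • x) := Prod.ext hsa rfl
      rwa [this] at hmem2
    obtain ⟨σ, hσ, hpeq⟩ := hmem3
    rw [Prod.ext_iff] at hpeq
    have hσa : (σ : Equiv.Perm Atom) a = a := hpeq.1.symm
    have hσfix : ∀ e ∈ nsupp x, (σ : Equiv.Perm Atom) e = e := by
      intro e he
      rcases eq_or_ne e a with rfl | hea
      · exact hσa
      · exact hσ e ⟨he, hea⟩
    have hσx : σ • x = x := nsupp_supports hX x σ hσfix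
    have hsx : s • x = x := by
      have h2 : s • x = σ • x := hpeq.2
      rw [h2, hσx]
    exact (not_mem_nsupp_of_swap hX hlev hdx hsx (Ne.symm hdc)) hc1
  refine ⟨⟨nsupp x \ {a}, hSfin, hNS⟩, heq, ?_⟩
  rw [heq]
  simp
end
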